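/- Let g : [0,1] → ℝ be concave with g(0) = 0, and let η(x) = -x log x (η(0)=0). Then for every integer k > 1, the liminf as x → 0⁺ of g(x)/η(x) equals the liminf as n → ∞ of g(k^{-n})/η(k^{-n}). -/

import Mathlib

/-- The Shannon entropy function. -/
noncomputable def eta (x : ℝ) : ℝ := -x * Real.log x

open Filter Set

private lemma ratio_anti (g : ℝ → ℝ) (hconc : ConcaveOn ℝ (Set.Icc 0 1) g)
    (h0 : g 0 = 0) {x y : ℝ} (hx : 0 < x) (hxy : x ≤ y) (hy1 : y ≤ 1) :
    g y / y ≤ g x / x := by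
  have hy : 0 < y := lt_of_lt_of_le hx hxy
  have hmem0 : (0:ℝ) ∈ Set.Icc (0:ℝ) 1 := by constructor <;> norm_num
  have hmemy : y ∈ Set.Icc (0:ℝ) 1 := ⟨le_of_lt hy, hy1⟩
  have ha : (0:ℝ) ≤ 1 - x / y := by
    have : x / y ≤ 1 := (div_le_one hy).mpr hxy
    linarith
  have hb : (0:ℝ) ≤ x / y := le_of_lt (div_pos hx hy)
  have hsum : (1 - x / y) + x / y = 1 := by ring
  have hkey := hconc.2 hmem0 hmemy ha hb hsum
  simp only [smul_eq_mul, mul_zero, h0, zero_add, mul_zero] at hkey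
  have hxval : x / y * y = x := div_mul_cancel₀ x (ne_of_gt hy)
  rw [hxval] at hkey
  -- hkey : (1 - x/y) * 0 + x/y * g y ≤ g x, roughly
  have h2 : x / y * g y * y = g y * x := by field_simp
  have h3 := mul_le_mul_of_nonneg_right hkey (le_of_lt hy)
  rw [div_le_div_iff₀ hy hx]
  linarith [h2 ▸ h3]

theorem liminf_ratio_along_powers (g : ℝ → ℝ)
    (hconc : ConcaveOn ℝ (Set.Icc 0 1) g) (h0 : g 0 = 0)
    (hlim : Filter.Tendsto g (nhdsWithin 0 (Set.Ioi 0)) (nhds 0))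
    (k : ℕ) (hk : 1 < k) :
    Filter.liminf (fun x : ℝ => ((g x / eta x : ℝ) : EReal))
        (nhdsWithin 0 (Set.Ioo 0 1))
      = Filter.liminf
          (fun n : ℕ => ((g (((k:ℝ)^n)⁻¹) / eta (((k:ℝ)^n)⁻¹) : ℝ) : EReal))
          Filter.atTop := by
  classical
  have hk1 : (1:ℝ) < (k:ℝ) := by exact_mod_cast hk
  have hk0 : (0:ℝ) < (k:ℝ) := lt_trans one_pos hk1
  have hlogk : 0 < Real.log k := Real.log_pos hk1
  set m : ℕ → ℝ := fun n => ((k:ℝ)^n)⁻¹ with hm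
  set u : ℝ → EReal := fun x => ((g x / eta x : ℝ) : EReal) with hu
  -- basic facts about m
  have hmpos : ∀ n, 0 < m n := fun n => inv_pos.mpr (pow_pos hk0 n)
  have hmlt1 : ∀ n, 1 ≤ n → m n < 1 := by
    intro n hn
    have : (1:ℝ) < (k:ℝ)^n := one_lt_pow₀ hk1 (by omega)
    exact inv_lt_one_of_one_lt₀ this
  have hlogm : ∀ n : ℕ, Real.log (m n) = -(n * Real.log k) := by
    intro n
    simp [hm, Real.log_inv, Real.log_pow]
  have hetam : ∀ n : ℕ, eta (m n) = m n * (n * Real.log k) := by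
    intro n
    simp only [eta, hlogm]
    ring
  -- easy direction
  have easy : Filter.liminf u (nhdsWithin 0 (Set.Ioo 0 1))
      ≤ Filter.liminf (fun n : ℕ => u (m n)) Filter.atTop := by
    have htend : Tendsto m atTop (nhdsWithin 0 (Set.Ioo 0 1)) := by
      rw [tendsto_nhdsWithin_iff]
      constructor
      · have : Tendsto (fun n : ℕ => ((k:ℝ)⁻¹)^n) atTop (nhds 0) :=
          tendsto_pow_atTop_nhds_zero_of_lt_one (by positivity)
            (inv_lt_one_of_one_lt₀ hk1)
        simpa [hm, inv_pow] using this
      · filter_upwards [eventually_ge_atTop 1] with n hn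
        exact ⟨hmpos n, hmlt1 n hn⟩
    exact Filter.liminf_le_liminf_of_le htend
  -- hard direction
  have hard : Filter.liminf (fun n : ℕ => u (m n)) Filter.atTop
      ≤ Filter.liminf u (nhdsWithin 0 (Set.Ioo 0 1)) := by
    rw [Filter.le_liminf_iff]
    intro c hc
    obtain ⟨c₂, hcc₂, hc₂⟩ := EReal.lt_iff_exists_real_btwn.mp hc
    obtain ⟨c₁, hcc₁, hc₁c₂'⟩ := EReal.lt_iff_exists_real_btwn.mp hcc₂
    have hc₁c₂ : c₁ < c₂ := by exact_mod_cast hc₁c₂'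
    -- eventually the sequence ratio exceeds c₂
    have hev : ∀ᶠ n in atTop, (c₂ : EReal) < u (m n) :=
      Filter.eventually_lt_of_lt_liminf hc₂
    -- eventually c₂ * (n/(n+1)) > c₁
    have hev2 : ∀ᶠ n : ℕ in atTop, c₁ < c₂ * ((n:ℝ)/((n:ℝ)+1)) := by
      have h1 : Tendsto (fun n : ℕ => c₂ * ((n:ℝ)/((n:ℝ)+1))) atTop (nhds c₂) := by
        have := (tendsto_natCast_div_add_atTop (1:ℝ)).const_mul c₂
        simpa using this
      exact h1.eventually_const_lt hc₁c₂
    obtain ⟨N₀, hN₀⟩ := (hev.and hev2).exists_forall_of_atTop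
    set N := max N₀ 1 with hN
    have hN1 : 1 ≤ N := le_max_right _ _
    have hNspec : ∀ n, N ≤ n →
        (c₂ : EReal) < u (m n) ∧ c₁ < c₂ * ((n:ℝ)/((n:ℝ)+1)) :=
      fun n hn => hN₀ n (le_trans (le_max_left _ _) hn)
    -- the neighborhood
    have hmem : ∀ᶠ x in nhdsWithin 0 (Set.Ioo 0 1), x ∈ Set.Ioo (0:ℝ) 1 :=
      self_mem_nhdsWithin
    have hsmall : ∀ᶠ x in nhdsWithin 0 (Set.Ioo 0 1), x < m N :=
      mem_nhdsWithin_of_mem_nhds (Iio_mem_nhds (hmpos N))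
    filter_upwards [hmem, hsmall] with x hx hxN
    obtain ⟨hx0, hx1⟩ := hx
    -- find n with m (n+1) < x ≤ m n, n ≥ N
    set P : ℕ → Prop := fun j => x ≤ ((k:ℝ)^j)⁻¹ with hP
    obtain ⟨M, hM⟩ := pow_unbounded_of_one_lt (x⁻¹) hk1
    have hMP : ¬ P M := by
      simp only [hP]
      intro h
      have h2 : ((k:ℝ)^M)⁻¹⁻¹ ≤ x⁻¹ := inv_anti₀ hx0 h
      rw [inv_inv] at h2
      linarith
    have hPN : P N := le_of_lt hxN
    have hNM : N ≤ M := by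
      by_contra hcon
      push_neg at hcon
      apply hMP
      show x ≤ ((k:ℝ)^M)⁻¹
      refine le_trans hPN ?_
      apply inv_anti₀ (pow_pos hk0 M)
      exact pow_le_pow_right₀ (le_of_lt hk1) (le_of_lt hcon)
    set n := Nat.findGreatest P M with hn
    have hnN : N ≤ n := Nat.le_findGreatest hNM hPN
    have hPn : P n := Nat.findGreatest_spec hNM hPN
    have hn1 : 1 ≤ n := le_trans hN1 hnN
    have hnM : n ≠ M := fun h => hMP (h ▸ hPn)
    have hle : n ≤ M := hn ▸ Nat.findGreatest_le M
    have hnM' : n + 1 ≤ M := by omega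
    have hnotP : ¬ P (n + 1) := by
      refine Nat.findGreatest_is_greatest ?_ hnM'
      omega
    have hnotP' : ((k:ℝ)^(n+1))⁻¹ < x := by
      simp only [hP] at hnotP
      exact lt_of_not_ge hnotP
    -- now the core estimate
    set y := m n with hy
    have hy0 : 0 < y := hmpos n
    have hy1' : y < 1 := hmlt1 n hn1
    have hxy : x ≤ y := by simpa [hP] using hPn
    have hrat : g y / y ≤ g x / x := ratio_anti g hconc h0 hx0 hxy (le_of_lt hy1')
    -- log bounds
    have hnlogk : (0:ℝ) < (n:ℝ) * Real.log k := by
      have : (1:ℝ) ≤ (n:ℝ) := by exact_mod_cast hn1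
      nlinarith
    have hlogx_ub : -Real.log x ≤ ((n:ℝ)+1) * Real.log k := by
      have h1 : Real.log (((k:ℝ)^(n+1))⁻¹) < Real.log x :=
        Real.log_lt_log (hmpos (n+1)) hnotP' 
      have h2 := hlogm (n+1)
      push_cast at h2
      rw [h2] at h1
      linarith
    have hlogx_lb : (n:ℝ) * Real.log k ≤ -Real.log x := by
      have h1 : Real.log x ≤ Real.log y := Real.log_le_log hx0 hxy
      rw [hlogm n] at h1
      linarith
    have hlogx_pos : 0 < -Real.log x := lt_of_lt_of_le hnlogk hlogx_lb
    have hetax : eta x = x * (-Real.log x) := by simp only [eta]; ring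
    have hratio_eq : g x / eta x = (g x / x) / (-Real.log x) := by
      rw [hetax, div_div]
    -- R = the sequence ratio at n, real valued
    set R : ℝ := g y / eta y with hR
    have hR_eq : R = (g y / y) / ((n:ℝ) * Real.log k) := by
      rw [hR, hetam n, div_div]
    have hRc₂ : c₂ < R := by
      have h5 := (hNspec n hnN).1
      simp only [hu] at h5
      exact EReal.coe_lt_coe_iff.mp h5
    have hfrac : c₁ < c₂ * ((n:ℝ)/((n:ℝ)+1)) := (hNspec n hnN).2
    have hn1pos : (0:ℝ) < (n:ℝ) + 1 := by positivity
    have hfracpos : (0:ℝ) < (n:ℝ)/((n:ℝ)+1) := by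
      apply div_pos _ hn1pos
      exact_mod_cast Nat.lt_of_lt_of_le Nat.zero_lt_one hn1
    have hstep1 : (g y / y) / (-Real.log x) ≤ g x / eta x := by
      rw [hratio_eq]
      gcongr
    have hmain : c₁ < g x / eta x := by
      rcases le_or_gt 0 (g y) with hgy | hgy
      · -- nonnegative case
        have hgyy : 0 ≤ g y / y := div_nonneg hgy (le_of_lt hy0)
        have h2 : (g y / y) / (((n:ℝ)+1) * Real.log k) ≤ (g y / y) / (-Real.log x) := by
          apply div_le_div_of_nonneg_left hgyy hlogx_pos hlogx_ub
        have h3 : (g y / y) / (((n:ℝ)+1) * Real.log k) = R * ((n:ℝ)/((n:ℝ)+1)) := by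
          rw [hR_eq]
          field_simp
        have h4 : c₂ * ((n:ℝ)/((n:ℝ)+1)) < R * ((n:ℝ)/((n:ℝ)+1)) :=
          mul_lt_mul_of_pos_right hRc₂ hfracpos
        calc c₁ < c₂ * ((n:ℝ)/((n:ℝ)+1)) := hfrac
          _ < R * ((n:ℝ)/((n:ℝ)+1)) := h4
          _ = (g y / y) / (((n:ℝ)+1) * Real.log k) := h3.symm
          _ ≤ (g y / y) / (-Real.log x) := h2
          _ ≤ g x / eta x := hstep1
      · -- negative case
        have hgyy : g y / y < 0 := div_neg_of_neg_of_pos hgy hy0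
        have h2 : (g y / y) / ((n:ℝ) * Real.log k) ≤ (g y / y) / (-Real.log x) := by
          rw [div_le_div_iff₀ hnlogk hlogx_pos]
          nlinarith
        calc c₁ < c₂ := hc₁c₂
          _ < R := hRc₂
          _ = (g y / y) / ((n:ℝ) * Real.log k) := hR_eq
          _ ≤ (g y / y) / (-Real.log x) := h2
          _ ≤ g x / eta x := hstep1
    calc c < (c₁ : EReal) := hcc₁
      _ < ((g x / eta x : ℝ) : EReal) := by exact_mod_cast hmain
  exact le_antisymm easy hard
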